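/- arXiv:2207.06962 — 8 statements merged into one kernel-verified Lean document; each statement's English description precedes it below -/
import Mathlib

section
/- Let L be a complete lattice with a commutator operation as above. If a ⊔ b = ⊤ and a ⊔ c = ⊤, then a ⊔ [b,c] = ⊤ and a ⊔ (b ⊓ c) = ⊤. -/
theorem sup_commutator_eq_top_of_codisjoint {L : Type*} [CompleteLattice L]
    (com : L → L → L)
    (hcomm : ∀ a b : L, com a b = com b a)
    (hmono : ∀ a b c : L, a ≤ b → com a c ≤ com b c)
    (hle : ∀ a b : L, com a b ≤ a ⊓ b)
    (hdist : ∀ (s : Set L) (b : L), com (sSup s) b = ⨆ x ∈ s, com x b)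
    (htop : ∀ a : L, com ⊤ a = a)
    (a b c : L) (hab : a ⊔ b = ⊤) (hac : a ⊔ c = ⊤) :
    a ⊔ com b c = ⊤ ∧ a ⊔ (b ⊓ c) = ⊤ := by
  have hdist2 : ∀ x y z : L, com (x ⊔ y) z = com x z ⊔ com y z := by
    intro x y z
    have : x ⊔ y = sSup {x, y} := by simp
    rw [this, hdist]
    simp [iSup_or, iSup_sup_eq]
  have key : (⊤ : L) ≤ a ⊔ com b c := by
    have h1 : (⊤ : L) = com (a ⊔ b) (a ⊔ c) := by rw [hab, hac, htop]
    rw [h1]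
    calc com (a ⊔ b) (a ⊔ c) = com a (a ⊔ c) ⊔ com b (a ⊔ c) := hdist2 _ _ _
      _ = com a (a ⊔ c) ⊔ (com b a ⊔ com b c) := by
          rw [hcomm b (a ⊔ c), hdist2, hcomm a b, hcomm c b]
      _ ≤ a ⊔ com b c := by
          have h2 : com a (a ⊔ c) ≤ a := (hle _ _).trans inf_le_left
          have h3 : com b a ≤ a := (hle _ _).trans inf_le_right
          exact sup_le (h2.trans le_sup_left)
            (sup_le (h3.trans le_sup_left) le_sup_right)
  have h1 : a ⊔ com b c = ⊤ := top_le_iff.mp key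
  refine ⟨h1, top_le_iff.mp ?_⟩
  calc (⊤ : L) = a ⊔ com b c := h1.symm
    _ ≤ a ⊔ (b ⊓ c) := sup_le_sup_left (hle b c) a
end

section
/- Let L be a complete lattice with a commutator operation as above. Define [a,a]^1 = [a,a] and [a,a]^{n+1} = [[a,a]^n,[a,a]^n]. If a ⊔ b = ⊤ then [a,a]^n ⊔ [b,b]^n = ⊤ for every integer n ≥ 1. -/
/-- Iterated commutator: `comPow com a n` is `[a,a]^n` for `n ≥ 1` (with `comPow com a 0 = a`). -/
def comPow {L : Type*} [CompleteLattice L] (com : L → L → L) (a : L) : ℕ → L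
  | 0 => a
  | n + 1 => com (comPow com a n) (comPow com a n)

theorem comPow_sup_comPow_eq_top_of_codisjoint {L : Type*} [CompleteLattice L]
    (com : L → L → L)
    (hcomm : ∀ a b : L, com a b = com b a)
    (hmono : ∀ a b c : L, a ≤ b → com a c ≤ com b c)
    (hle : ∀ a b : L, com a b ≤ a ⊓ b)
    (hdist : ∀ (s : Set L) (b : L), com (sSup s) b = ⨆ x ∈ s, com x b)
    (htop : ∀ a : L, com ⊤ a = a)
    (a b : L) (hab : a ⊔ b = ⊤) :
    ∀ n : ℕ, 1 ≤ n → comPow com a n ⊔ comPow com b n = ⊤ := by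
  -- distributivity over binary sup
  have hsup : ∀ x y c : L, com (x ⊔ y) c = com x c ⊔ com y c := by
    intro x y c
    have := hdist {x, y} c
    simpa [sSup_pair, iSup_or, iSup_sup_eq] using this
  -- one-step lemma
  have hstep : ∀ x y : L, x ⊔ y = ⊤ → com x x ⊔ com y y = ⊤ := by
    intro x y hxy
    have hxy' : x ⊓ y ≤ com x x ⊔ com y y := by
      have : com (x ⊔ y) (x ⊓ y) = x ⊓ y := by rw [hxy, htop]
      calc x ⊓ y = com x (x ⊓ y) ⊔ com y (x ⊓ y) := by rw [← hsup, hxy, htop]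
        _ ≤ com x x ⊔ com y y := by
            apply sup_le_sup
            · rw [hcomm x (x ⊓ y), hcomm x x]; exact hmono _ _ _ inf_le_left
            · rw [hcomm y (x ⊓ y), hcomm y y]; exact hmono _ _ _ inf_le_right
    have htot : (⊤ : L) = com x x ⊔ com x y ⊔ (com y x ⊔ com y y) := by
      rw [← htop ⊤, ← hxy, hsup, hcomm x (x ⊔ y), hcomm y (x ⊔ y), hsup, hsup]
      rw [hcomm y x, hcomm x x, hcomm y y]
    apply top_le_iff.mp
    rw [htot]
    have hcross : com x y ≤ com x x ⊔ com y y :=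
      le_trans (hle x y) hxy'
    have hcross' : com y x ≤ com x x ⊔ com y y := by rw [hcomm]; exact hcross
    exact sup_le (sup_le le_sup_left hcross) (sup_le hcross' le_sup_right)
  have hall : ∀ n : ℕ, comPow com a n ⊔ comPow com b n = ⊤ := by
    intro n
    induction n with
    | zero => exact hab
    | succ n ih => exact hstep _ _ ih
  intro n _
  exact hall n
end

section
/- Under the same hypotheses, the set of radical elements RCon = {a ∈ L : ρ(a) = a}, with meet inherited from L and join defined by ⨆^· a_i = ρ(⨆ a_i), is a frame: binary meets distribute over arbitrary joins, i.e., a ⊓ ρ(⨆_i b_i) = ρ(⨆_i (a ⊓ b_i)) for a and all b_i radical. -/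
/-- `p` is a prime element with respect to the commutator `com`. -/
def ComPrime {L : Type*} [CompleteLattice L] (com : L → L → L) (p : L) : Prop :=
  p ≠ ⊤ ∧ ∀ a b : L, com a b ≤ p → a ≤ p ∨ b ≤ p

/-- The radical of `a`: the infimum of all primes above `a`. -/
def comRho {L : Type*} [CompleteLattice L] (com : L → L → L) (a : L) : L :=
  sInf {p | ComPrime com p ∧ a ≤ p}

theorem radical_frame_distributivity {L : Type*} [CompleteLattice L]
    (com : L → L → L)
    (hcomm : ∀ a b : L, com a b = com b a)
    (hmono : ∀ a b c : L, a ≤ b → com a c ≤ com b c)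
    (hle : ∀ a b : L, com a b ≤ a ⊓ b)
    (hdist : ∀ (s : Set L) (b : L), com (sSup s) b = ⨆ x ∈ s, com x b)
    (htop : ∀ a : L, com ⊤ a = a)
    (hex : ∀ a : L, a ≠ ⊤ → ∃ p, ComPrime com p ∧ a ≤ p)
    {ι : Type*} (a : L) (b : ι → L)
    (ha : comRho com a = a) (hb : ∀ i, comRho com (b i) = b i) :
    a ⊓ comRho com (⨆ i, b i) = comRho com (⨆ i, a ⊓ b i) := by
  apply le_antisymm
  · apply le_sInf
    rintro p ⟨hp, hsp⟩
    by_cases hap : a ≤ p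
    · exact le_trans inf_le_left hap
    · have hbp : ∀ i, b i ≤ p := fun i =>
        (hp.2 a (b i) (le_trans (hle a (b i)) (le_trans (le_iSup (fun i => a ⊓ b i) i) hsp))).resolve_left hap
      exact le_trans inf_le_right (sInf_le ⟨hp, iSup_le hbp⟩)
  · refine le_inf ?_ ?_
    · calc comRho com (⨆ i, a ⊓ b i) ≤ comRho com a :=
            sInf_le_sInf (fun p hp => ⟨hp.1, le_trans (iSup_le fun i => inf_le_left) hp.2⟩)
        _ = a := ha
    · exact sInf_le_sInf (fun p hp =>
        ⟨hp.1, le_trans (iSup_le fun i => le_trans inf_le_right (le_iSup _ i)) hp.2⟩)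
end

section
/- Let L be a complete lattice with commutator as above and let a, b ∈ L with a ⊔ b = ⊤ and [a,b] = ⊥. Then a is complemented in L with complement b; moreover the complement equals the annihilator a^⊥ = ⨆{c : [a,c] = ⊥}. -/
theorem isCompl_of_codisjoint_commutator_bot {L : Type*} [CompleteLattice L]
    (com : L → L → L)
    (hcomm : ∀ a b : L, com a b = com b a)
    (hmono : ∀ a b c : L, a ≤ b → com a c ≤ com b c)
    (hle : ∀ a b : L, com a b ≤ a ⊓ b)
    (hdist : ∀ (s : Set L) (b : L), com (sSup s) b = ⨆ x ∈ s, com x b)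
    (htop : ∀ a : L, com ⊤ a = a)
    (a b : L) (hsup : a ⊔ b = ⊤) (hbot : com a b = ⊥) :
    IsCompl a b ∧ b = sSup {c : L | com a c = ⊥} := by
  have hsup2 : ∀ x y z : L, com (x ⊔ y) z = com x z ⊔ com y z := by
    intro x y z
    have : x ⊔ y = sSup {x, y} := by simp
    rw [this, hdist]
    rw [iSup_pair]
  -- key: if a ⊔ c = ⊤ and com a c = ⊥ then a ⊓ c = ⊥
  have key : ∀ c : L, com a c = ⊥ → a ⊓ c ≤ ⊥ := by
    intro c hc
    calc a ⊓ c = com ⊤ (a ⊓ c) := (htop _).symm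
    _ ≤ com (a ⊔ c) (a ⊓ c) ⊔ com b (a ⊓ c) := by
        rw [← hsup2]
        apply hmono
        calc ⊤ = a ⊔ b := hsup.symm
        _ ≤ a ⊔ c ⊔ b := by gcongr; exact le_sup_left
    _ ≤ (com a c ⊔ com c a) ⊔ com a b := by
        gcongr
        · rw [hsup2]
          gcongr
          · rw [hcomm a (a ⊓ c), hcomm a c]; exact hmono _ _ _ inf_le_right
          · rw [hcomm c (a ⊓ c), hcomm c a]; exact hmono _ _ _ inf_le_left
        · rw [hcomm b (a ⊓ c)]; exact hmono _ _ _ inf_le_left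
    _ = ⊥ := by rw [hc, hcomm c a, hc, hbot]; simp
  have hdisj : Disjoint a b := disjoint_iff_inf_le.mpr (key b hbot)
  refine ⟨⟨hdisj, codisjoint_iff.mpr hsup⟩, le_antisymm (le_sSup hbot) ?_⟩
  have hS : com a (sSup {c : L | com a c = ⊥}) = ⊥ := by
    rw [hcomm, hdist]
    simp only [Set.mem_setOf_eq]
    apply le_bot_iff.mp
    apply iSup_le; intro c; apply iSup_le; intro hc
    rw [hcomm, hc]
  calc sSup {c : L | com a c = ⊥} = com ⊤ (sSup {c : L | com a c = ⊥}) := (htop _).symm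
  _ = com a (sSup {c : L | com a c = ⊥}) ⊔ com b (sSup {c : L | com a c = ⊥}) := by
      rw [← hsup2, hsup]
  _ ≤ ⊥ ⊔ b := by
      rw [hS]
      gcongr
      exact (hle _ _).trans inf_le_left
  _ = b := by simp
end

section
/- Let L be a complete lattice with commutator as above, let K ⊆ L be the set of compact elements (assumed join-dense, closed under finite joins, with ⊥ ∈ K and ⊤ ∈ K), and let C be the smallest subset of L containing K and closed under binary join and binary commutator. Define a ≡ b iff ρ(a) = ρ(b) on C; then the quotient D = C/≡ with operations induced by ⊔ and [·,·] is a bounded distributive lattice. -/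
/-- `C`: the closure of the set of compact elements under binary joins and commutators. -/
inductive InC {L : Type*} [CompleteLattice L] (com : L → L → L) : L → Prop
  | base (a : L) : IsCompactElement a → InC com a
  | join {a b : L} : InC com a → InC com b → InC com (a ⊔ b)
  | comm {a b : L} : InC com a → InC com b → InC com (com a b)

namespace Retic

universe u
variable {L : Type u} [CompleteLattice L] (com : L → L → L)

/-- The type of primes. -/
abbrev Pr := {p : L // ComPrime com p}

/-- The "open set" map: primes NOT above `x`. -/
def g (x : {a : L // InC com a}) : Set (Pr com) := {p | ¬ x.1 ≤ p.1}

/-- The image of `C` under `g`. -/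
def S : Set (Set (Pr com)) := Set.range (g com)

/-- Carrier of the reticulation. -/
abbrev Dc : Type u := ↥(S com)

lemma g_sup (x y : {a : L // InC com a}) :
    g com ⟨x.1 ⊔ y.1, InC.join x.2 y.2⟩ = g com x ∪ g com y := by
  ext p
  simp only [g, Set.mem_setOf_eq, Set.mem_union, sup_le_iff, not_and_or]

lemma g_com (hle : ∀ a b : L, com a b ≤ a ⊓ b) (x y : {a : L // InC com a}) :
    g com ⟨com x.1 y.1, InC.comm x.2 y.2⟩ = g com x ∩ g com y := by
  ext p
  simp only [g, Set.mem_setOf_eq, Set.mem_inter_iff]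
  constructor
  · intro h
    constructor
    · exact fun hx => h (le_trans (le_trans (hle _ _) inf_le_left) hx)
    · exact fun hy => h (le_trans (le_trans (hle _ _) inf_le_right) hy)
  · rintro ⟨hx, hy⟩ h
    rcases p.2.2 _ _ h with h' | h'
    · exact hx h'
    · exact hy h'

lemma g_bot (hbotc : IsCompactElement (⊥ : L)) :
    g com ⟨⊥, InC.base ⊥ hbotc⟩ = ∅ := by
  ext p; simp [g]

lemma g_top (htopc : IsCompactElement (⊤ : L)) :
    g com ⟨⊤, InC.base ⊤ htopc⟩ = Set.univ := by
  ext p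
  simp only [g, Set.mem_setOf_eq, Set.mem_univ, iff_true, top_le_iff]
  exact p.2.1

lemma g_eq_iff (x y : {a : L // InC com a}) :
    g com x = g com y ↔ comRho com x.1 = comRho com y.1 := by
  constructor
  · intro h
    have : {p : L | ComPrime com p ∧ x.1 ≤ p} = {p | ComPrime com p ∧ y.1 ≤ p} := by
      ext q
      simp only [Set.mem_setOf_eq]
      constructor
      · rintro ⟨hq, hxq⟩
        refine ⟨hq, ?_⟩
        by_contra hyq
        have := (Set.ext_iff.1 h ⟨q, hq⟩).2 hyq
        exact this hxq
      · rintro ⟨hq, hyq⟩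
        refine ⟨hq, ?_⟩
        by_contra hxq
        have := (Set.ext_iff.1 h ⟨q, hq⟩).1 hxq
        exact this hyq
    simp only [comRho, this]
  · intro h
    have key : ∀ a : L, a ≤ comRho com a :=
      fun a => le_sInf (fun q hq => hq.2)
    ext p
    simp only [g, Set.mem_setOf_eq, not_iff_not]
    constructor
    · intro hx
      have : comRho com x.1 ≤ p.1 := sInf_le ⟨p.2, hx⟩
      exact le_trans (key y.1) (h ▸ this)
    · intro hy
      have : comRho com y.1 ≤ p.1 := sInf_le ⟨p.2, hy⟩
      exact le_trans (key x.1) (h.symm ▸ this)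

/-- Distributive lattice structure on `Dc`. -/
def instDL (hle : ∀ a b : L, com a b ≤ a ⊓ b) : DistribLattice (Dc com) :=
  { (inferInstance : PartialOrder (Dc com)) with
    sup := fun a b => ⟨a.1 ∪ b.1, by
      obtain ⟨x, hx⟩ := a.2
      obtain ⟨y, hy⟩ := b.2
      exact ⟨⟨x.1 ⊔ y.1, InC.join x.2 y.2⟩, by rw [g_sup, hx, hy]⟩⟩
    inf := fun a b => ⟨a.1 ∩ b.1, by
      obtain ⟨x, hx⟩ := a.2
      obtain ⟨y, hy⟩ := b.2
      exact ⟨⟨com x.1 y.1, InC.comm x.2 y.2⟩, by rw [g_com com hle, hx, hy]⟩⟩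
    le_sup_left := fun a b => Set.subset_union_left
    le_sup_right := fun a b => Set.subset_union_right
    sup_le := fun a b c h1 h2 => Set.union_subset h1 h2
    inf_le_left := fun a b => Set.inter_subset_left
    inf_le_right := fun a b => Set.inter_subset_right
    le_inf := fun a b c h1 h2 => Set.subset_inter h1 h2
    le_sup_inf := fun a b c => by
      change (a.1 ∪ b.1) ∩ (a.1 ∪ c.1) ⊆ a.1 ∪ b.1 ∩ c.1
      exact (le_sup_inf : (a.1 ⊔ b.1) ⊓ (a.1 ⊔ c.1) ≤ a.1 ⊔ b.1 ⊓ c.1) }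

/-- Bounded order structure on `Dc`. -/
def instBO (hbotc : IsCompactElement (⊥ : L))
    (htopc : IsCompactElement (⊤ : L)) : BoundedOrder (Dc com) :=
  { top := ⟨Set.univ, ⟨⟨⊤, InC.base ⊤ htopc⟩, g_top com htopc⟩⟩
    le_top := fun a => Set.subset_univ a.1
    bot := ⟨∅, ⟨⟨⊥, InC.base ⊥ hbotc⟩, g_bot com hbotc⟩⟩
    bot_le := fun a => Set.empty_subset a.1 }

end Retic

/-- The quotient of `C` by `a ≡ b ↔ ρ(a) = ρ(b)`, with operations induced by `⊔` and the
commutator, is a bounded distributive lattice. -/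
theorem reticulation_is_bounded_distributive_lattice {L : Type u} [CompleteLattice L]
    (com : L → L → L)
    (hcomm : ∀ a b : L, com a b = com b a)
    (hmono : ∀ a b c : L, a ≤ b → com a c ≤ com b c)
    (hle : ∀ a b : L, com a b ≤ a ⊓ b)
    (hdist : ∀ (s : Set L) (b : L), com (sSup s) b = ⨆ x ∈ s, com x b)
    (htop : ∀ a : L, com ⊤ a = a)
    (hex : ∀ a : L, a ≠ ⊤ → ∃ p, ComPrime com p ∧ a ≤ p)
    (hcg : ∀ a : L, a = sSup {k | IsCompactElement k ∧ k ≤ a})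
    (hbotc : IsCompactElement (⊥ : L))
    (htopc : IsCompactElement (⊤ : L)) :
    ∃ (D : BddDistLat.{u}) (f : {a : L // InC com a} → ↥D),
      Function.Surjective f ∧
      (∀ x y : {a : L // InC com a}, f x = f y ↔ comRho com x.1 = comRho com y.1) ∧
      (∀ x y : {a : L // InC com a},
        f ⟨x.1 ⊔ y.1, InC.join x.2 y.2⟩ = f x ⊔ f y) ∧
      (∀ x y : {a : L // InC com a},
        f ⟨com x.1 y.1, InC.comm x.2 y.2⟩ = f x ⊓ f y) ∧
      f ⟨⊥, InC.base ⊥ hbotc⟩ = ⊥ ∧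
      f ⟨⊤, InC.base ⊤ htopc⟩ = ⊤ := by
  letI : DistribLattice (Retic.Dc com) := Retic.instDL com hle
  letI : BoundedOrder (Retic.Dc com) := { Retic.instBO com hbotc htopc with }
  refine ⟨@BddDistLat.of (Retic.Dc com) _ this,
    fun x => ⟨Retic.g com x, Set.mem_range_self x⟩, ?_, ?_, ?_, ?_, ?_, ?_⟩
  · rintro ⟨s, x, hx⟩
    exact ⟨x, Subtype.ext hx⟩
  · intro x y
    rw [← Retic.g_eq_iff com x y]
    exact ⟨fun h => congrArg Subtype.val h, fun h => Subtype.ext h⟩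
  · intro x y
    exact Subtype.ext (Retic.g_sup com x y)
  · intro x y
    exact Subtype.ext (Retic.g_com com hle x y)
  · exact Subtype.ext (Retic.g_bot com hbotc)
  · exact Subtype.ext (Retic.g_top com htopc)
end

section
/- In the setting of the reticulation, for every prime element p of L we have (p^*)_* = p, where p^* = {λ(a) : a ∈ K, a ≤ p} and for an ideal I of D, I_* = ⨆{a ∈ K : λ(a) ∈ I}. Consequently the map p ↦ p^* from primes of L to prime ideals of D is injective. -/
/-- `θ^* = {λ(a) : a compact, a ≤ θ}` as a subset of the reticulation. -/
def upStar {L : Type*} [CompleteLattice L] {D : Type*} (lam : L → D) (θ : L) : Set D :=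
  {d | ∃ a : L, IsCompactElement a ∧ a ≤ θ ∧ lam a = d}

/-- `I_* = ⨆{a compact : λ(a) ∈ I}`. -/
def downStar {L : Type*} [CompleteLattice L] {D : Type*} (lam : L → D) (I : Set D) : L :=
  sSup {a : L | IsCompactElement a ∧ lam a ∈ I}

theorem downStar_upStar_prime_and_injective {L : Type*} [CompleteLattice L]
    (com : L → L → L)
    (hcomm : ∀ a b : L, com a b = com b a)
    (hmono : ∀ a b c : L, a ≤ b → com a c ≤ com b c)
    (hle : ∀ a b : L, com a b ≤ a ⊓ b)
    (hdist : ∀ (s : Set L) (b : L), com (sSup s) b = ⨆ x ∈ s, com x b)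
    (htop : ∀ a : L, com ⊤ a = a)
    (hex : ∀ a : L, a ≠ ⊤ → ∃ p, ComPrime com p ∧ a ≤ p)
    (hcg : ∀ a : L, a = sSup {k | IsCompactElement k ∧ k ≤ a})
    (htopc : IsCompactElement (⊤ : L))
    {D : Type*} [DistribLattice D] [BoundedOrder D] (lam : L → D)
    (hlamle : ∀ a b : L, InC com a → InC com b →
      (lam a ≤ lam b ↔ comRho com a ≤ comRho com b))
    (hlamsup : ∀ a b : L, InC com a → InC com b → lam (a ⊔ b) = lam a ⊔ lam b)
    (hlaminf : ∀ a b : L, InC com a → InC com b → lam (com a b) = lam a ⊓ lam b)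
    (hlambot : lam ⊥ = ⊥) (hlamtop : ∀ a : L, InC com a → (lam a = ⊤ ↔ a = ⊤))
    (hlamsurj : ∀ d : D, ∃ a : L, InC com a ∧ lam a = d) :
    (∀ p : L, ComPrime com p → downStar lam (upStar lam p) = p) ∧
    (∀ p q : L, ComPrime com p → ComPrime com q → upStar lam p = upStar lam q → p = q) := by
  have main : ∀ p : L, ComPrime com p → downStar lam (upStar lam p) = p := by
    intro p hp
    apply le_antisymm
    · apply sSup_le
      rintro a ⟨hac, b, hbc, hbp, hba⟩
      -- lam b = lam a, so comRho a ≤ comRho b ≤ p, and a ≤ comRho a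
      have h1 : lam a ≤ lam b := le_of_eq hba.symm
      have h2 : comRho com a ≤ comRho com b :=
        (hlamle a b (InC.base a hac) (InC.base b hbc)).mp h1
      have h3 : a ≤ comRho com a := le_sInf fun x hx => hx.2
      have h4 : comRho com b ≤ p := sInf_le ⟨hp, hbp⟩
      exact h3.trans (h2.trans h4)
    · conv_lhs => rw [hcg p]
      apply sSup_le
      rintro k ⟨hkc, hkp⟩
      exact le_sSup ⟨hkc, k, hkc, hkp, rfl⟩
  refine ⟨main, fun p q hp hq h => ?_⟩
  rw [← main p hp, ← main q hq, h]
end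

section
/- Call L quasi-commutative if for all compact a, b ∈ K there exists compact c with c ≤ [a,b] and ρ(c) = ρ([a,b]). If L is quasi-commutative, then for every θ ∈ C (the closure of K under joins and commutators) there exists compact c with c ≤ θ and ρ(c) = ρ(θ). -/
lemma compact_sup {L : Type*} [CompleteLattice L] {a b : L}
    (ha : IsCompactElement a) (hb : IsCompactElement b) :
    IsCompactElement (a ⊔ b) := by
  classical
  have := CompleteLattice.isCompactElement_finsetSup (f := id) ({a, b} : Finset L)
    (by intro x hx; simp at hx; rcases hx with h | h <;> subst h <;> assumption)
  simpa using this

theorem quasiCommutative_compact_below_in_C {L : Type*} [CompleteLattice L]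
    (com : L → L → L)
    (hcomm : ∀ a b : L, com a b = com b a)
    (hmono : ∀ a b c : L, a ≤ b → com a c ≤ com b c)
    (hle : ∀ a b : L, com a b ≤ a ⊓ b)
    (hdist : ∀ (s : Set L) (b : L), com (sSup s) b = ⨆ x ∈ s, com x b)
    (htop : ∀ a : L, com ⊤ a = a)
    (hex : ∀ a : L, a ≠ ⊤ → ∃ p, ComPrime com p ∧ a ≤ p)
    (hcg : ∀ a : L, a = sSup {k | IsCompactElement k ∧ k ≤ a})
    (htopc : IsCompactElement (⊤ : L))
    (hqc : ∀ a b : L, IsCompactElement a → IsCompactElement b →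
      ∃ c : L, IsCompactElement c ∧ c ≤ com a b ∧
        comRho com c = comRho com (com a b)) :
    ∀ θ : L, InC com θ →
      ∃ c : L, IsCompactElement c ∧ c ≤ θ ∧ comRho com c = comRho com θ := by
  have hrad : ∀ a : L, a ≤ comRho com a := fun a => le_sInf fun p hp => hp.2
  have hiff : ∀ (a p : L), ComPrime com p → (a ≤ p ↔ comRho com a ≤ p) := by
    intro a p hp
    exact ⟨fun h => sInf_le ⟨hp, h⟩, fun h => (hrad a).trans h⟩
  have hset : ∀ a c : L, comRho com c = comRho com a →
      ∀ p, ComPrime com p → (a ≤ p ↔ c ≤ p) := by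
    intro a c h p hp
    rw [hiff a p hp, hiff c p hp, h]
  have hprimecom : ∀ (x y p : L), ComPrime com p → (com x y ≤ p ↔ x ≤ p ∨ y ≤ p) := by
    intro x y p hp
    refine ⟨hp.2 x y, fun h => ?_⟩
    rcases h with h | h
    · exact (hle x y).trans (le_trans inf_le_left h)
    · exact (hle x y).trans (le_trans inf_le_right h)
  intro θ hθ
  induction hθ with
  | base a ha => exact ⟨a, ha, le_rfl, rfl⟩
  | @join a b ha hb iha ihb =>
    obtain ⟨c₁, hc₁, hle₁, hr₁⟩ := iha
    obtain ⟨c₂, hc₂, hle₂, hr₂⟩ := ihb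
    refine ⟨c₁ ⊔ c₂, compact_sup hc₁ hc₂, sup_le_sup hle₁ hle₂, ?_⟩
    unfold comRho
    congr 1
    ext p
    simp only [Set.mem_setOf_eq, sup_le_iff]
    constructor
    · rintro ⟨hp, h1, h2⟩
      exact ⟨hp, (hset a c₁ hr₁ p hp).mpr h1, (hset b c₂ hr₂ p hp).mpr h2⟩
    · rintro ⟨hp, h1, h2⟩
      exact ⟨hp, (hset a c₁ hr₁ p hp).mp h1, (hset b c₂ hr₂ p hp).mp h2⟩
  | @comm a b ha hb iha ihb =>
    obtain ⟨c₁, hc₁, hle₁, hr₁⟩ := iha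
    obtain ⟨c₂, hc₂, hle₂, hr₂⟩ := ihb
    obtain ⟨c, hc, hcle, hcr⟩ := hqc c₁ c₂ hc₁ hc₂
    have hsub : com c₁ c₂ ≤ com a b := by
      calc com c₁ c₂ ≤ com a c₂ := hmono _ _ _ hle₁
        _ = com c₂ a := hcomm _ _
        _ ≤ com b a := hmono _ _ _ hle₂
        _ = com a b := hcomm _ _
    refine ⟨c, hc, hcle.trans hsub, ?_⟩
    rw [hcr]
    unfold comRho
    congr 1
    ext p
    simp only [Set.mem_setOf_eq]
    constructor
    · rintro ⟨hp, h⟩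
      refine ⟨hp, (hprimecom a b p hp).mpr ?_⟩
      rcases (hprimecom c₁ c₂ p hp).mp h with h | h
      · exact Or.inl ((hset a c₁ hr₁ p hp).mpr h)
      · exact Or.inr ((hset b c₂ hr₂ p hp).mpr h)
    · rintro ⟨hp, h⟩
      refine ⟨hp, (hprimecom c₁ c₂ p hp).mpr ?_⟩
      rcases (hprimecom a b p hp).mp h with h | h
      · exact Or.inl ((hset a c₁ hr₁ p hp).mp h)
      · exact Or.inr ((hset b c₂ hr₂ p hp).mp h)
end

section
/- Assume L is semiprime (ρ(⊥) = ⊥). Then the map a ↦ λ(a) restricts to an isomorphism from the Boolean algebra of complemented elements of L onto the Boolean algebra of complemented elements of the reticulation D. (In particular: it is an injective Boolean morphism, and surjectivity uses semiprimeness: λ(a) = 0 implies a = ⊥.) -/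
theorem boolean_center_iso_of_semiprime {L : Type*} [CompleteLattice L]
    (com : L → L → L)
    (hcomm : ∀ a b : L, com a b = com b a)
    (hmono : ∀ a b c : L, a ≤ b → com a c ≤ com b c)
    (hle : ∀ a b : L, com a b ≤ a ⊓ b)
    (hdist : ∀ (s : Set L) (b : L), com (sSup s) b = ⨆ x ∈ s, com x b)
    (htop : ∀ a : L, com ⊤ a = a)
    (hex : ∀ a : L, a ≠ ⊤ → ∃ p, ComPrime com p ∧ a ≤ p)
    (hcg : ∀ a : L, a = sSup {k | IsCompactElement k ∧ k ≤ a})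
    (htopc : IsCompactElement (⊤ : L))
    {D : Type*} [DistribLattice D] [BoundedOrder D] (lam : L → D)
    (hlamle : ∀ a b : L, InC com a → InC com b →
      (lam a ≤ lam b ↔ comRho com a ≤ comRho com b))
    (hlamsup : ∀ a b : L, InC com a → InC com b → lam (a ⊔ b) = lam a ⊔ lam b)
    (hlaminf : ∀ a b : L, InC com a → InC com b → lam (com a b) = lam a ⊓ lam b)
    (hlambot : lam ⊥ = ⊥) (hlamtop : ∀ a : L, InC com a → (lam a = ⊤ ↔ a = ⊤))
    (hlamsurj : ∀ d : D, ∃ a : L, InC com a ∧ lam a = d)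
    (hsemiprime : comRho com (⊥ : L) = ⊥)
    (hcompl_compact : ∀ a : L, (∃ b, IsCompl a b) → IsCompactElement a) :
    (∀ a b : L, (∃ a', IsCompl a a') → (∃ b', IsCompl b b') →
      lam (a ⊔ b) = lam a ⊔ lam b ∧ lam (a ⊓ b) = lam a ⊓ lam b) ∧
    (∀ a : L, (∃ b, IsCompl a b) → ∃ d : D, IsCompl (lam a) d) ∧
    (∀ a b : L, (∃ a', IsCompl a a') → (∃ b', IsCompl b b') → lam a = lam b → a = b) ∧
    (∀ d : D, (∃ e, IsCompl d e) → ∃ a : L, (∃ b, IsCompl a b) ∧ lam a = d) := by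
  classical
  -- basic compactness facts
  have hbotc : IsCompactElement (⊥ : L) := by
    intro s hs
    intro hne _ _ _
    exact ⟨hne.some, hne.some_mem, bot_le⟩
  -- binary join distributivity of com
  have hcomsup : ∀ a b c : L, com (a ⊔ b) c = com a c ⊔ com b c := by
    intro a b c
    rw [← sSup_pair, hdist]
    exact iSup_pair
  -- complemented elements absorb meets into commutators
  have hinf_eq_com : ∀ a b : L, (∃ a', IsCompl a a') → a ⊓ b = com a b := by
    rintro a b ⟨a', h⟩
    refine le_antisymm ?_ (hle a b)
    calc a ⊓ b = com ⊤ (a ⊓ b) := (htop _).symm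
      _ = com (a ⊔ a') (a ⊓ b) := by rw [h.sup_eq_top]
      _ = com a (a ⊓ b) ⊔ com a' (a ⊓ b) := hcomsup a a' (a ⊓ b)
      _ ≤ com a b ⊔ ⊥ := by
          refine sup_le_sup ?_ ?_
          · rw [hcomm a (a ⊓ b), hcomm a b]
            exact hmono _ _ _ inf_le_right
          · refine le_trans (hle a' (a ⊓ b)) ?_
            refine le_trans (inf_le_inf_left a' inf_le_left) ?_
            rw [inf_comm, h.inf_eq_bot]
      _ = com a b := sup_bot_eq _
  -- semiprimeness: com a b = ⊥ implies a ⊓ b = ⊥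
  have hdisj : ∀ a b : L, com a b = ⊥ → a ⊓ b = ⊥ := by
    intro a b h
    have hab : a ⊓ b ≤ comRho com ⊥ := by
      apply le_sInf
      rintro p ⟨hp, -⟩
      rcases hp.2 a b (h ▸ bot_le) with h1 | h1
      · exact inf_le_left.trans h1
      · exact inf_le_right.trans h1
    exact le_bot_iff.mp (hab.trans_eq hsemiprime)
  -- lam reflects ⊥ on C
  have hlam_bot : ∀ a : L, InC com a → lam a = ⊥ → a = ⊥ := by
    intro a ha h
    have h1 : a ≤ comRho com a := le_sInf fun p hp => hp.2
    have h2 : comRho com a ≤ comRho com ⊥ :=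
      (hlamle a ⊥ ha (InC.base ⊥ hbotc)).mp (by rw [h, hlambot])
    exact le_bot_iff.mp (h1.trans (h2.trans_eq hsemiprime))
  have hInC : ∀ a : L, (∃ b, IsCompl a b) → InC com a := fun a h =>
    InC.base a (hcompl_compact a h)
  refine ⟨?_, ?_, ?_, ?_⟩
  · intro a b ha hb
    have hIa := hInC a ha
    have hIb := hInC b hb
    refine ⟨hlamsup a b hIa hIb, ?_⟩
    rw [hinf_eq_com a b ha, hlaminf a b hIa hIb]
  · rintro a ⟨a', h⟩
    have hIa := hInC a ⟨a', h⟩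
    have hIa' := hInC a' ⟨a, h.symm⟩
    refine ⟨lam a', isCompl_iff.mpr ⟨disjoint_iff.mpr ?_, codisjoint_iff.mpr ?_⟩⟩
    · rw [← hlaminf a a' hIa hIa', ← hinf_eq_com a a' ⟨a', h⟩, h.inf_eq_bot, hlambot]
    · rw [← hlamsup a a' hIa hIa', h.sup_eq_top]
      exact (hlamtop ⊤ (InC.base ⊤ htopc)).mpr rfl
  · intro a b ha hb hab
    have step : ∀ x y y' : L, (∃ x', IsCompl x x') → IsCompl y y' → lam x = lam y → x ≤ y := by
      intro x y y' hx hy hxy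
      have hIx := hInC x hx
      have hIy := hInC y ⟨y', hy⟩
      have hIy' := hInC y' ⟨y, hy.symm⟩
      have h0 : lam (com y' x) = ⊥ := by
        rw [hlaminf y' x hIy' hIx, hxy, ← hlaminf y' y hIy' hIy,
          ← hinf_eq_com y' y ⟨y, hy.symm⟩, hy.symm.inf_eq_bot, hlambot]
      have h1 : com y' x = ⊥ := hlam_bot _ (InC.comm hIy' hIx) h0
      calc x = com ⊤ x := (htop x).symm
        _ = com (y ⊔ y') x := by rw [hy.sup_eq_top]
        _ = com y x ⊔ com y' x := hcomsup y y' x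
        _ ≤ y ⊔ ⊥ := sup_le_sup ((hle y x).trans inf_le_left) (le_of_eq h1)
        _ = y := sup_bot_eq y
    obtain ⟨a', ha'⟩ := ha
    obtain ⟨b', hb'⟩ := hb
    exact le_antisymm (step a b b' ⟨a', ha'⟩ hb' hab) (step b a a' ⟨b', hb'⟩ ha' hab.symm)
  · rintro d ⟨e, hde⟩
    obtain ⟨a, hIa, ha⟩ := hlamsurj d
    obtain ⟨c, hIc, hc⟩ := hlamsurj e
    have hsup : a ⊔ c = ⊤ := (hlamtop _ (InC.join hIa hIc)).mp
      (by rw [hlamsup a c hIa hIc, ha, hc, hde.sup_eq_top])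
    have hcom : com a c = ⊥ := hlam_bot _ (InC.comm hIa hIc)
      (by rw [hlaminf a c hIa hIc, ha, hc, hde.inf_eq_bot])
    have hinf : a ⊓ c = ⊥ := hdisj a c hcom
    exact ⟨a, ⟨c, isCompl_iff.mpr ⟨disjoint_iff.mpr hinf, codisjoint_iff.mpr hsup⟩⟩, ha⟩
end
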